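/- Let an instance with n clients and m days be given, and construct a new instance with clients {1,…,n+1} and m+1 days as follows: on each day i ≤ m the conflict graph is the original G_i together with client n+1 adjacent to all of 1,…,n; on day m+1 the conflict graph is the complete graph on {1,…,n+1}. Then the original instance admits a 1-fair solution if and only if the new instance admits a 1-fair solution. -/

import Mathlib

theorem add_blocking_client_and_day (n m : ℕ) (G : Fin m → SimpleGraph (Fin n))
    (H : Fin (m + 1) → SimpleGraph (Fin (n + 1)))
    (hH : ∀ i : Fin (m + 1), H i =
      if h : (i : ℕ) < m then
        SimpleGraph.fromRel (fun (a b : Fin (n + 1)) =>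
          (∃ (ha : (a : ℕ) < n) (hb : (b : ℕ) < n),
            (G ⟨(i : ℕ), h⟩).Adj ⟨(a : ℕ), ha⟩ ⟨(b : ℕ), hb⟩) ∨
          (a : ℕ) = n ∨ (b : ℕ) = n)
      else ⊤) :
    (∃ σ : Fin m → Finset (Fin n),
      (∀ i, ∀ a ∈ σ i, ∀ b ∈ σ i, ¬ (G i).Adj a b) ∧
      (∀ j : Fin n, ∃ i, j ∈ σ i)) ↔
    (∃ σ' : Fin (m + 1) → Finset (Fin (n + 1)),
      (∀ i, ∀ a ∈ σ' i, ∀ b ∈ σ' i, ¬ (H i).Adj a b) ∧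
      (∀ j : Fin (n + 1), ∃ i, j ∈ σ' i)) := by
  classical
  constructor
  · rintro ⟨σ, hind, hcov⟩
    refine ⟨fun i => if h : (i : ℕ) < m then (σ ⟨i, h⟩).image Fin.castSucc
      else {Fin.last n}, ?_, ?_⟩
    · intro i a ha b hb hadj
      by_cases h : (i : ℕ) < m
      · simp only [dif_pos h, Finset.mem_image] at ha hb
        obtain ⟨a₀, ha₀, rfl⟩ := ha
        obtain ⟨b₀, hb₀, rfl⟩ := hb
        rw [hH i, dif_pos h, SimpleGraph.fromRel_adj] at hadj
        obtain ⟨hne, hrel | hrel⟩ := hadj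
        · obtain ⟨ha', hb', hg⟩ | h' | h' := hrel
          · simp only [Fin.coe_castSucc, Fin.eta] at hg
            exact hind ⟨i, h⟩ a₀ ha₀ b₀ hb₀ hg
          · rw [Fin.coe_castSucc] at h'; exact absurd h' (Nat.ne_of_lt a₀.isLt)
          · rw [Fin.coe_castSucc] at h'; exact absurd h' (Nat.ne_of_lt b₀.isLt)
        · obtain ⟨ha', hb', hg⟩ | h' | h' := hrel
          · simp only [Fin.coe_castSucc, Fin.eta] at hg
            exact hind ⟨i, h⟩ b₀ hb₀ a₀ ha₀ hg
          · rw [Fin.coe_castSucc] at h'; exact absurd h' (Nat.ne_of_lt b₀.isLt)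
          · rw [Fin.coe_castSucc] at h'; exact absurd h' (Nat.ne_of_lt a₀.isLt)
      · simp only [dif_neg h, Finset.mem_singleton] at ha hb
        subst ha; subst hb
        exact (H i).loopless.irrefl _ hadj
    · intro j
      by_cases hj : (j : ℕ) < n
      · obtain ⟨k, hk⟩ := hcov ⟨j, hj⟩
        refine ⟨k.castSucc, ?_⟩
        have h : ((k.castSucc : Fin (m+1)) : ℕ) < m := by simpa using k.isLt
        simp only [dif_pos h, Finset.mem_image]
        refine ⟨⟨j, hj⟩, ?_, Fin.ext rfl⟩
        have hke : (⟨((k.castSucc : Fin (m+1)) : ℕ), h⟩ : Fin m) = k := Fin.ext (by simp)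
        rw [hke]; exact hk
      · refine ⟨Fin.last m, ?_⟩
        have h : ¬ ((Fin.last m : Fin (m+1)) : ℕ) < m := by simp
        simp only [dif_neg h, Finset.mem_singleton]
        exact Fin.ext (by have := j.isLt; simp; omega)
  · rintro ⟨σ', hind, hcov⟩
    have hlast : H (Fin.last m) = ⊤ := by rw [hH]; simp
    have hlast1 : ∀ a ∈ σ' (Fin.last m), ∀ b ∈ σ' (Fin.last m), a = b := by
      intro a ha b hb
      by_contra hne
      exact hind _ a ha b hb (by rw [hlast]; exact hne)
    have hHk : ∀ k : Fin m, H k.castSucc = SimpleGraph.fromRel (fun (a b : Fin (n + 1)) =>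
        (∃ (ha : (a : ℕ) < n) (hb : (b : ℕ) < n),
          (G k).Adj ⟨(a : ℕ), ha⟩ ⟨(b : ℕ), hb⟩) ∨
        (a : ℕ) = n ∨ (b : ℕ) = n) := by
      intro k
      have h : ((k.castSucc : Fin (m+1)) : ℕ) < m := by simpa using k.isLt
      have hke : (⟨((k.castSucc : Fin (m+1)) : ℕ), h⟩ : Fin m) = k := Fin.ext (by simp)
      rw [hH, dif_pos h, hke]
    refine ⟨fun k => Finset.univ.filter (fun j : Fin n =>
      j.castSucc ∈ σ' k.castSucc ∨
      (Fin.last n ∈ σ' k.castSucc ∧ j.castSucc ∈ σ' (Fin.last m))), ?_, ?_⟩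
    · intro k a ha b hb hadj
      simp only [Finset.mem_filter, Finset.mem_univ, true_and] at ha hb
      rcases ha with ha | ⟨hLa, ha⟩
      · rcases hb with hb | ⟨hLb, hb⟩
        · refine hind k.castSucc a.castSucc ha b.castSucc hb ?_
          rw [hHk k, SimpleGraph.fromRel_adj]
          refine ⟨fun h => hadj.ne (Fin.castSucc_injective n h), Or.inl (Or.inl ?_)⟩
          refine ⟨by simpa using a.isLt, by simpa using b.isLt, ?_⟩
          simpa using hadj
        · refine hind k.castSucc a.castSucc ha (Fin.last n) hLb ?_
          rw [hHk k, SimpleGraph.fromRel_adj]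
          refine ⟨?_, Or.inl (Or.inr (Or.inr (by simp)))⟩
          intro heq
          have h1 := congrArg Fin.val heq
          rw [Fin.coe_castSucc, Fin.val_last] at h1
          exact absurd h1 (Nat.ne_of_lt a.isLt)
      · rcases hb with hb | ⟨hLb, hb⟩
        · refine hind k.castSucc (Fin.last n) hLa b.castSucc hb ?_
          rw [hHk k, SimpleGraph.fromRel_adj]
          refine ⟨?_, Or.inl (Or.inr (Or.inl (by simp)))⟩
          intro heq
          have h1 := congrArg Fin.val heq
          rw [Fin.coe_castSucc, Fin.val_last] at h1
          exact absurd h1.symm (Nat.ne_of_lt b.isLt)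
        · have := hlast1 _ ha _ hb
          exact hadj.ne (Fin.castSucc_injective n this)
    · intro j
      obtain ⟨i, hi⟩ := hcov j.castSucc
      by_cases h : (i : ℕ) < m
      · refine ⟨⟨i, h⟩, ?_⟩
        simp only [Finset.mem_filter, Finset.mem_univ, true_and]
        left
        have hke : (⟨(i : ℕ), h⟩ : Fin m).castSucc = i := Fin.ext (by simp)
        rw [hke]; exact hi
      · have hieq : i = Fin.last m := Fin.ext (by have := i.isLt; simp; omega)
        subst hieq
        obtain ⟨i', hi'⟩ := hcov (Fin.last n)
        have h' : (i' : ℕ) < m := by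
          by_contra h'
          have hieq' : i' = Fin.last m := Fin.ext (by have := i'.isLt; simp; omega)
          subst hieq'
          have h1 := congrArg Fin.val (hlast1 _ hi' _ hi)
          rw [Fin.val_last, Fin.coe_castSucc] at h1
          have := j.isLt
          omega
        refine ⟨⟨i', h'⟩, ?_⟩
        simp only [Finset.mem_filter, Finset.mem_univ, true_and]
        right
        have hke : (⟨(i' : ℕ), h'⟩ : Fin m).castSucc = i' := Fin.ext (by simp)
        rw [hke]
        exact ⟨hi', hi⟩
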